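/- Let f : (0,∞) → ℝ be non-decreasing and concave with lim_{x↓0} f(x) = −∞, p̂ ∈ Δ(V) with p̂_1 ≥ … ≥ p̂_d > 0, and p̂_d ≤ ε < p̂_1. Let î = max{i : p̂_i > ε}. Then for every q ∈ Δ(V) with q_i = 0 for all i > î, the infimum over p ∈ N(p̂) of Σ_i q_i f(p_i) (in the extended reals) equals Σ_i q_i f(p̂_i) − max_{1 ≤ i ≤ î} q_i g⁻(p̂_i), where g⁻(x) = f(x) − f(x − ε). -/

import Mathlib

open Finset

def simplex (d : ℕ) : Set (Fin d → ℝ) := {p | (∀ i, 0 ≤ p i) ∧ ∑ i, p i = 1}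

noncomputable def dTV {d : ℕ} (p q : Fin d → ℝ) : ℝ := (∑ i, |p i - q i|) / 2

def nbhd {d : ℕ} (phat : Fin d → ℝ) (ε : ℝ) : Set (Fin d → ℝ) :=
  {p | p ∈ simplex d ∧ dTV p phat ≤ ε}

/-- `f` extended to `[0,∞)` (and below) with value `−∞` for nonpositive arguments. -/
noncomputable def fext (f : ℝ → ℝ) (x : ℝ) : EReal := if x ≤ 0 then ⊥ else ((f x : ℝ) : EReal)

/-- The extended-real objective `Σ_i q_i f(p_i)` with the convention `0 · (−∞) = 0`. -/
noncomputable def objf {d : ℕ} (f : ℝ → ℝ) (q p : Fin d → ℝ) : EReal :=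
  ∑ i, ((q i : ℝ) : EReal) * fext f (p i)

lemma ereal_coe_sum {α : Type*} (s : Finset α) (g : α → ℝ) :
    ((∑ i ∈ s, g i : ℝ) : EReal) = ∑ i ∈ s, ((g i : ℝ) : EReal) :=
  map_sum (⟨⟨Real.toEReal, EReal.coe_zero⟩, fun x y => EReal.coe_add x y⟩ : ℝ →+ EReal) g s

/-- closed form of the inner minimization for a general objective `f`
in the large-budget case `p̂_d ≤ ε < p̂_1`, on strategies supported in `{1,…,î}`. -/
theorem stmt6 {d : ℕ} (hd : 0 < d) (f : ℝ → ℝ)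
    (hmono : MonotoneOn f (Set.Ioi 0))
    (hconc : ConcaveOn ℝ (Set.Ioi 0) f)
    (htend : Filter.Tendsto f (nhdsWithin 0 (Set.Ioi 0)) Filter.atBot)
    (phat : Fin d → ℝ) (ε : ℝ)
    (hmem : phat ∈ simplex d)
    (hpos : ∀ i, 0 < phat i)
    (hsort : ∀ i j : Fin d, i ≤ j → phat j ≤ phat i)
    (heps_lo : phat ⟨d - 1, by omega⟩ ≤ ε)
    (heps_hi : ε < phat ⟨0, hd⟩)
    (ihat : Fin d)
    (hihat1 : ε < phat ihat)
    (hihat2 : ∀ i : Fin d, ε < phat i → i ≤ ihat)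
    (q : Fin d → ℝ) (hq : q ∈ simplex d)
    (hqz : ∀ i : Fin d, ihat < i → q i = 0) :
    ⨅ p ∈ nbhd phat ε, objf f q p
      = (((∑ i, q i * f (phat i))
          - sSup {x : ℝ | ∃ i : Fin d, i ≤ ihat ∧
              x = q i * (f (phat i) - f (phat i - ε))} : ℝ) : EReal) := by
  have hlast : d - 1 < d := by omega
  set last : Fin d := ⟨d - 1, hlast⟩ with hlast_def
  have hε_pos : 0 < ε := lt_of_lt_of_le (hpos last) heps_lo
  have hihat_last : ihat < last := by
    have hle : ihat ≤ last := by
      have := ihat.isLt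
      rw [Fin.le_def]
      simp only [hlast_def]
      omega
    rcases lt_or_eq_of_le hle with h | h
    · exact h
    · exfalso; rw [h] at hihat1
      exact absurd (lt_of_lt_of_le hihat1 heps_lo) (lt_irrefl _)
  have hkey : ∀ i : Fin d, i ≤ ihat → ε < phat i :=
    fun i hi => lt_of_lt_of_le hihat1 (hsort i ihat hi)
  have hpos' : ∀ i : Fin d, i ≤ ihat → 0 < phat i - ε := fun i hi => sub_pos.2 (hkey i hi)
  set g : Fin d → ℝ := fun i => q i * (f (phat i) - f (phat i - ε)) with hg_def
  set S : Set ℝ := {x : ℝ | ∃ i : Fin d, i ≤ ihat ∧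
      x = q i * (f (phat i) - f (phat i - ε))} with hS_def
  have hSim : S = g '' Set.Iic ihat := by
    ext x; constructor
    · rintro ⟨i, hi, rfl⟩; exact ⟨i, hi, rfl⟩
    · rintro ⟨i, hi, rfl⟩; exact ⟨i, hi, rfl⟩
  have hSfin : S.Finite := by rw [hSim]; exact (Set.toFinite _).image _
  have hSne : S.Nonempty := ⟨g ihat, ihat, le_refl _, rfl⟩
  set M : ℝ := sSup S with hM_def
  have hMmem : M ∈ S := hSne.csSup_mem hSfin
  have hMub : ∀ i : Fin d, i ≤ ihat → g i ≤ M :=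
    fun i hi => le_csSup hSfin.bddAbove ⟨i, hi, rfl⟩
  have hg_nonneg : ∀ i : Fin d, i ≤ ihat → 0 ≤ g i := by
    intro i hi
    apply mul_nonneg (hq.1 i)
    have h1 : phat i - ε ∈ Set.Ioi (0:ℝ) := hpos' i hi
    have h2 : phat i ∈ Set.Ioi (0:ℝ) := hpos i
    have := hmono h1 h2 (by linarith)
    linarith
  have hM0 : 0 ≤ M := by
    obtain ⟨i, hi, h⟩ := hMmem
    rw [h]; exact hg_nonneg i hi
  apply le_antisymm
  · -- upper bound : the infimum is at most the claimed value
    obtain ⟨istar, histar, hMeq⟩ := hMmem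
    have histar_ne : istar ≠ last := ne_of_lt (lt_of_le_of_lt histar hihat_last)
    set c : Fin d → ℝ := fun j =>
      (if j = istar then -ε else 0) + (if j = last then ε else 0) with hc_def
    set p0 : Fin d → ℝ := fun j => phat j + c j with hp0_def
    have hp0_istar : p0 istar = phat istar - ε := by
      show phat istar + ((if istar = istar then -ε else 0) + (if istar = last then ε else 0))
        = phat istar - ε
      rw [if_pos rfl, if_neg histar_ne]; ring
    have hp0_last : p0 last = phat last + ε := by
      show phat last + ((if last = istar then -ε else 0) + (if last = last then ε else 0))
        = phat last + ε
      rw [if_pos rfl, if_neg (Ne.symm histar_ne)]; ring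
    have hp0_other : ∀ j, j ≠ istar → j ≠ last → p0 j = phat j := by
      intro j h1 h2
      show phat j + ((if j = istar then -ε else 0) + (if j = last then ε else 0)) = phat j
      rw [if_neg h1, if_neg h2]; ring
    have hp0_pos : ∀ j, 0 < p0 j := by
      intro j
      by_cases h1 : j = istar
      · subst h1; rw [hp0_istar]; exact hpos' j histar
      · by_cases h2 : j = last
        · subst h2; rw [hp0_last]; linarith [hpos last]
        · rw [hp0_other j h1 h2]; exact hpos j
    have hp0_mem : p0 ∈ nbhd phat ε := by
      refine ⟨⟨fun j => (hp0_pos j).le, ?_⟩, ?_⟩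
      · have : ∑ j, p0 j = ∑ j, phat j + ∑ j, c j := by
          simp only [hp0_def]; rw [Finset.sum_add_distrib]
        rw [this, hmem.2]
        simp only [hc_def]
        rw [Finset.sum_add_distrib, Finset.sum_ite_eq' univ istar fun _ => -ε,
          Finset.sum_ite_eq' univ last fun _ => ε]
        simp only [Finset.mem_univ, if_true]; ring
      · have habs : ∀ j, |p0 j - phat j|
            = (if j = istar then ε else 0) + (if j = last then ε else 0) := by
          intro j
          by_cases h1 : j = istar
          · subst h1; rw [hp0_istar, if_pos rfl, if_neg histar_ne]
            rw [show phat j - ε - phat j = -ε by ring, abs_neg, abs_of_pos hε_pos]; ring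
          · by_cases h2 : j = last
            · subst h2; rw [hp0_last, if_neg h1, if_pos rfl]
              rw [show phat last + ε - phat last = ε by ring, abs_of_pos hε_pos]; ring
            · rw [hp0_other j h1 h2, if_neg h1, if_neg h2, sub_self, abs_zero]; ring
        show (∑ j, |p0 j - phat j|) / 2 ≤ ε
        have : ∑ j, |p0 j - phat j| = 2 * ε := by
          simp only [habs]
          rw [Finset.sum_add_distrib, Finset.sum_ite_eq' univ istar fun _ => ε,
            Finset.sum_ite_eq' univ last fun _ => ε]
          simp only [Finset.mem_univ, if_true]; ring
        rw [this]; linarith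
    have hobj : objf f q p0 = (((∑ i, q i * f (phat i)) - M : ℝ) : EReal) := by
      have h1 : ∀ j, ((q j : ℝ) : EReal) * fext f (p0 j) = (((q j * f (p0 j) : ℝ)) : EReal) := by
        intro j
        rw [fext, if_neg (not_le.2 (hp0_pos j)), ← EReal.coe_mul]
      have h2 : ∀ j, q j * f (p0 j)
          = q j * f (phat j)
            + (if j = istar then q istar * (f (phat istar - ε) - f (phat istar)) else 0) := by
        intro j
        by_cases hj1 : j = istar
        · subst hj1; rw [hp0_istar, if_pos rfl]; ring
        · by_cases hj2 : j = last
          · subst hj2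
            rw [if_neg hj1, hqz last hihat_last]; ring
          · rw [hp0_other j hj1 hj2, if_neg hj1]; ring
      rw [objf]
      simp only [h1]
      rw [← ereal_coe_sum]
      congr 1
      calc ∑ j, q j * f (p0 j)
          = ∑ j, (q j * f (phat j)
            + (if j = istar then q istar * (f (phat istar - ε) - f (phat istar)) else 0)) := by
            exact Finset.sum_congr rfl fun j _ => h2 j
        _ = (∑ j, q j * f (phat j)) - M := by
            rw [Finset.sum_add_distrib,
              Finset.sum_ite_eq' univ istar fun _ => q istar * (f (phat istar - ε) - f (phat istar))]
            simp only [Finset.mem_univ, if_true]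
            rw [hMeq]; ring
    exact iInf₂_le_of_le p0 hp0_mem (le_of_eq hobj)
  · -- lower bound
    refine le_iInf₂ fun p hp => ?_
    obtain ⟨⟨hnn, hsum⟩, hTV⟩ := hp
    have hTV' : ∑ j, |p j - phat j| ≤ 2 * ε := by
      have : (∑ j, |p j - phat j|) / 2 ≤ ε := hTV
      linarith
    -- positivity of p on the support of q
    have hppos : ∀ i : Fin d, q i ≠ 0 → 0 < p i := by
      intro i hqi
      by_contra h
      push_neg at h
      have hi_le : i ≤ ihat := by
        by_contra h'
        push_neg at h'
        exact hqi (hqz i h')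
      have h1 : ε < phat i := hkey i hi_le
      have h2 : ∑ j ∈ univ.erase i, (p j - phat j) = phat i - p i := by
        have hea := Finset.sum_erase_add univ (fun j => p j - phat j) (Finset.mem_univ i)
        have hs : ∑ j, (p j - phat j) = 0 := by
          rw [Finset.sum_sub_distrib, hsum, hmem.2]; ring
        linarith [hea, hs]
      have h3 : phat i - p i ≤ ∑ j ∈ univ.erase i, |p j - phat j| := by
        calc phat i - p i = |∑ j ∈ univ.erase i, (p j - phat j)| := by
              rw [h2, abs_of_nonneg]; linarith [hpos i]
          _ ≤ ∑ j ∈ univ.erase i, |p j - phat j| := Finset.abs_sum_le_sum_abs _ _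
      have h4 : ∑ j, |p j - phat j| = |p i - phat i| + ∑ j ∈ univ.erase i, |p j - phat j| := by
        rw [← Finset.add_sum_erase univ (fun j => |p j - phat j|) (Finset.mem_univ i)]
      have h5 : |p i - phat i| = phat i - p i := by
        rw [abs_sub_comm, abs_of_nonneg]; linarith [hpos i]
      have : 2 * (phat i - p i) ≤ 2 * ε := by
        calc 2 * (phat i - p i) = (phat i - p i) + (phat i - p i) := by ring
          _ ≤ |p i - phat i| + ∑ j ∈ univ.erase i, |p j - phat j| := by
              rw [h5]; linarith
          _ ≤ 2 * ε := by rw [← h4]; exact hTV'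
      linarith
    set r : Fin d → ℝ := fun j => if 0 < p j then f (p j) else 0 with hr_def
    -- the objective value is a real number
    have hobjp : objf f q p = ((∑ j, q j * r j : ℝ) : EReal) := by
      rw [objf, ereal_coe_sum]
      refine Finset.sum_congr rfl fun j _ => ?_
      by_cases hq0 : q j = 0
      · simp [hq0]
      · have hpj : 0 < p j := hppos j hq0
        rw [fext, if_neg (not_le.2 hpj), hr_def]
        simp only [if_pos hpj]
        rw [← EReal.coe_mul]
    set δ : Fin d → ℝ := fun j => max (phat j - p j) 0 with hδ_def
    have hδ_nonneg : ∀ j, 0 ≤ δ j := fun j => le_max_right _ _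
    have hδsum : ∑ j, δ j ≤ ε := by
      have hδeq : ∀ j, δ j = (|p j - phat j| + (phat j - p j)) / 2 := by
        intro j
        rcases le_total (p j) (phat j) with h | h
        · rw [hδ_def]
          simp only [max_eq_left (by linarith : (0:ℝ) ≤ phat j - p j)]
          rw [abs_sub_comm, abs_of_nonneg (by linarith : (0:ℝ) ≤ phat j - p j)]; ring
        · rw [hδ_def]
          simp only [max_eq_right (by linarith : phat j - p j ≤ (0:ℝ))]
          rw [abs_of_nonneg (by linarith : (0:ℝ) ≤ p j - phat j)]; ring
      have hs0 : ∑ j, (phat j - p j) = 0 := by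
        rw [Finset.sum_sub_distrib, hsum, hmem.2]; ring
      calc ∑ j, δ j = (∑ j, |p j - phat j| + ∑ j, (phat j - p j)) / 2 := by
            simp only [hδeq]; rw [← Finset.sum_add_distrib, ← Finset.sum_div]
        _ = (∑ j, |p j - phat j|) / 2 := by rw [hs0]; ring
        _ ≤ ε := hTV
    have hterm : ∀ j, q j * f (phat j) - q j * r j ≤ (δ j / ε) * M := by
      intro j
      by_cases hq0 : q j = 0
      · rw [hq0]
        have : 0 ≤ (δ j / ε) * M :=
          mul_nonneg (div_nonneg (hδ_nonneg j) hε_pos.le) hM0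
        linarith
      · have hqpos : 0 < q j := lt_of_le_of_ne (hq.1 j) (Ne.symm hq0)
        have hpj : 0 < p j := hppos j hq0
        have hj_le : j ≤ ihat := by
          by_contra h'
          push_neg at h'
          exact hq0 (hqz j h')
        have hrj : r j = f (p j) := by rw [hr_def]; simp only [if_pos hpj]
        rw [hrj]
        by_cases hc : p j < phat j
        · have hδj : δ j = phat j - p j := max_eq_left (by linarith)
          have hδε : δ j ≤ ε := by
            have h1 : δ j ≤ ∑ k, δ k :=
              Finset.single_le_sum (fun k _ => hδ_nonneg k) (Finset.mem_univ j)
            linarith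
          set t : ℝ := δ j / ε with ht_def
          have ht0 : 0 ≤ t := div_nonneg (hδ_nonneg j) hε_pos.le
          have ht1 : t ≤ 1 := (div_le_one hε_pos).2 hδε
          have htε : t * ε = δ j := by
            rw [ht_def]; field_simp
          have hcomb : (1 - t) * phat j + t * (phat j - ε) = p j := by
            have : (1 - t) * phat j + t * (phat j - ε) = phat j - t * ε := by ring
            rw [this, htε, hδj]; ring
          have hcc := hconc.2 (Set.mem_Ioi.2 (hpos j)) (Set.mem_Ioi.2 (hpos' j hj_le))
            (by linarith : (0:ℝ) ≤ 1 - t) ht0 (by ring)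
          simp only [smul_eq_mul] at hcc
          rw [hcomb] at hcc
          have h5 : f (phat j) - f (p j) ≤ t * (f (phat j) - f (phat j - ε)) := by linarith
          have h6 : q j * (f (phat j) - f (p j)) ≤ t * g j := by
            calc q j * (f (phat j) - f (p j))
                ≤ q j * (t * (f (phat j) - f (phat j - ε))) :=
                  mul_le_mul_of_nonneg_left h5 hqpos.le
              _ = t * g j := by rw [hg_def]; ring
          have h7 : t * g j ≤ t * M := mul_le_mul_of_nonneg_left (hMub j hj_le) ht0
          have : q j * f (phat j) - q j * f (p j) ≤ t * M := by
            have : q j * (f (phat j) - f (p j)) ≤ t * M := le_trans h6 h7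
            linarith
          rw [ht_def] at this
          linarith
        · push_neg at hc
          have hδj : δ j = 0 := max_eq_right (by linarith)
          have hfle : f (phat j) ≤ f (p j) :=
            hmono (Set.mem_Ioi.2 (hpos j)) (Set.mem_Ioi.2 hpj) hc
          have : q j * f (phat j) - q j * f (p j) ≤ 0 := by nlinarith
          rw [hδj]
          simp only [zero_div, zero_mul]
          linarith
    have hmain : (∑ j, q j * f (phat j)) - M ≤ ∑ j, q j * r j := by
      have h6 : ∑ j, (q j * f (phat j) - q j * r j) ≤ ∑ j, (δ j / ε) * M :=
        Finset.sum_le_sum fun j _ => hterm j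
      have h7 : ∑ j, (δ j / ε) * M = ((∑ j, δ j) / ε) * M := by
        rw [← Finset.sum_mul, ← Finset.sum_div]
      have h8 : ((∑ j, δ j) / ε) * M ≤ M := by
        have h9 : (∑ j, δ j) / ε ≤ 1 := (div_le_one hε_pos).2 hδsum
        exact mul_le_of_le_one_left hM0 h9
      have h10 : ∑ j, (q j * f (phat j) - q j * r j)
          = (∑ j, q j * f (phat j)) - ∑ j, q j * r j := Finset.sum_sub_distrib _ _
      linarith
    rw [hobjp]
    exact_mod_cast EReal.coe_le_coe_iff.2 hmain
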